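/- Let w_1, …, w_n be positive integers, d = lcm(w_1, …, w_n), and g(t) = ∏_{i=1}^n (1 − t^{w_i}) (so deg g = w_1 + ⋯ + w_n). Let h(t) ∈ ℂ[t] and let f : ℕ → ℂ satisfy ∑_{k≥0} f(k) t^k = h(t)/g(t) as formal power series. Set k_0 = max{0, deg h − deg g + 1}. Then there exist polynomials P_0, …, P_{d−1} ∈ ℂ[x] such that f(k) = P_{k mod d}(k) for all k ≥ k_0; moreover, if deg h ≥ deg g, then for any polynomials P_0, …, P_{d−1} ∈ ℂ[x] satisfying f(k) = P_{k mod d}(k) for all k ≥ k_0 one has f(k_0 − 1) ≠ P_{(k_0−1) mod d}(k_0 − 1). In other words, the generalized regularity index of f equals max{0, deg h − deg g + 1}. -/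

import Mathlib

open Polynomial

-- E: difference operator is surjective
lemma lemE : ∀ (m : ℕ) (q : Polynomial ℂ), q.natDegree ≤ m →
    ∃ s : Polynomial ℂ, s.comp (X + 1) - s = q := by
  intro m
  induction m with
  | zero =>
    intro q hq
    refine ⟨C (q.coeff 0) * X, ?_⟩
    have : q = C (q.coeff 0) := (Polynomial.eq_C_of_natDegree_le_zero hq)
    rw [this]; simp [mul_add]
  | succ m ih =>
    intro q hq
    by_cases hle : q.natDegree ≤ m
    · exact ih q hle
    have hdeg : q.natDegree = m + 1 := le_antisymm hq (not_le.mp hle)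
    set c : ℂ := q.coeff (m+1) with hc
    set t : Polynomial ℂ := C (c / (m+2)) * X^(m+2) with ht
    set u : Polynomial ℂ := t.comp (X + 1) - t with hu
    have hucoeff : ∀ i, u.coeff i = (c / (m+2)) * ((m+2).choose i) - (c/(m+2)) * (X^(m+2) : Polynomial ℂ).coeff i := by
      intro i
      rw [hu, ht, mul_comp, C_comp, pow_comp, X_comp]
      rw [coeff_sub, coeff_C_mul, coeff_C_mul, coeff_X_add_one_pow]
    have hm2 : ((m:ℂ)+2) ≠ 0 := by
      have : ((m:ℂ)+2) = ((m+2 : ℕ) : ℂ) := by push_cast; ring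
      rw [this]
      exact Nat.cast_ne_zero.mpr (by omega)
    have hutop : u.coeff (m+1) = c := by
      rw [hucoeff]
      rw [coeff_X_pow]
      simp only [if_neg (by omega : ¬ (m+1 = m+2))]
      have : ((m+2).choose (m+1) : ℂ) = (m:ℂ) + 2 := by
        rw [Nat.choose_succ_self_right]
        push_cast; ring
      rw [this]
      field_simp
      ring
    have hq' : (q - u).natDegree ≤ m := by
      apply Polynomial.natDegree_le_iff_coeff_eq_zero.mpr
      intro i hi
      rcases Nat.lt_or_ge i (m+2) with h1 | h1
      · have hieq : i = m + 1 := by omega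
        rw [hieq]
        simp only [coeff_sub, hutop]
        rw [← hc, sub_self]
      · have hqz : q.coeff i = 0 := by
          apply Polynomial.coeff_eq_zero_of_natDegree_lt; omega
        have huz : u.coeff i = 0 := by
          rw [hucoeff, coeff_X_pow]
          rcases Nat.lt_or_ge (m+2) i with h2 | h2
          · rw [Nat.choose_eq_zero_of_lt h2]
            simp [if_neg (by omega : ¬ i = m+2)]
          · have : i = m + 2 := by omega
            subst this
            simp
        simp [coeff_sub, hqz, huz]
    obtain ⟨s', hs'⟩ := ih (q - u) hq'
    refine ⟨s' + t, ?_⟩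
    rw [add_comp, add_sub_add_comm, hs']
    rw [← hu]
    ring

-- D: discrete antiderivative
lemma lemD (q : Polynomial ℂ) : ∃ s : Polynomial ℂ,
    ∀ m : ℕ, ∑ j ∈ Finset.range (m+1), q.eval (j : ℂ) = s.eval (m : ℂ) := by
  obtain ⟨s₀, hs₀⟩ := lemE q.natDegree q le_rfl
  have key : ∀ x : ℂ, s₀.eval (x + 1) - s₀.eval x = q.eval x := by
    intro x
    have := congrArg (fun p => Polynomial.eval x p) hs₀
    simpa [eval_comp] using this
  refine ⟨s₀.comp (X + 1) - C (s₀.eval 0), ?_⟩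
  intro m
  induction m with
  | zero => simp [eval_comp, ← key 0]
  | succ m ih =>
    rw [Finset.sum_range_succ, ih]
    have hcast : ((m+1 : ℕ) : ℂ) = (m:ℂ) + 1 := by push_cast; ring
    rw [hcast]
    simp only [eval_sub, eval_comp, eval_add, eval_X, eval_one, eval_C]
    have := key ((m:ℂ) + 1)
    linear_combination -this

lemma lemC (d : ℕ) (hd : 0 < d) (p₀ : Polynomial ℂ) (Q : ℕ → Polynomial ℂ) :
    ∃ R : ℕ → Polynomial ℂ, ∀ k : ℕ,
      (R (k % d)).eval (k:ℂ) = p₀.coeff (k % d) +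
        ∑ j ∈ Finset.range (k/d + 1), (Q (k % d)).eval (((k % d : ℕ) : ℂ) + (d:ℂ) * j) := by
  have hdC : (d : ℂ) ≠ 0 := Nat.cast_ne_zero.mpr (by omega)
  choose s hs using fun r : ℕ => lemD ((Q r).comp (C ((r:ℕ) : ℂ) + C (d:ℂ) * X))
  refine ⟨fun r => C (p₀.coeff r) + (s r).comp (C (d:ℂ)⁻¹ * (X - C ((r:ℕ):ℂ))), fun k => ?_⟩
  set r := k % d with hr
  have hk : (d : ℂ) * ((k / d : ℕ) : ℂ) + ((r:ℕ):ℂ) = (k : ℂ) := by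
    have h1 := Nat.div_add_mod k d
    have : ((d * (k/d) + k % d : ℕ) : ℂ) = (k:ℂ) := by rw [h1]
    push_cast at this
    rw [← this, hr]
  have harg : (d:ℂ)⁻¹ * ((k:ℂ) - ((r:ℕ):ℂ)) = ((k / d : ℕ) : ℂ) := by
    field_simp [← hk]
    linear_combination -hk
  have := hs r (k / d)
  simp only [eval_comp, eval_add, eval_mul, eval_C, eval_X, eval_sub] at this ⊢
  rw [harg, ← this]

lemma lemB (d : ℕ) (hd : 0 < d) : ∀ (n : ℕ) (p : Polynomial ℂ) (Q : ℕ → Polynomial ℂ) (f : ℕ → ℂ),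
    p.degree < ((n * d : ℕ) : WithBot ℕ) →
    PowerSeries.mk f * ((1 : PowerSeries ℂ) - PowerSeries.X ^ d) ^ n
      = (p : PowerSeries ℂ) + PowerSeries.mk (fun k => (Q (k % d)).eval (k : ℂ)) →
    ∃ P : ℕ → Polynomial ℂ, ∀ k, f k = (P (k % d)).eval (k : ℂ) := by
  intro n
  induction n with
  | zero =>
    intro p Q f hdeg hmain
    have hp : p = 0 := by
      have h0 : p.degree < 0 := by simpa using hdeg
      exact degree_eq_bot.mp (Nat.WithBot.lt_zero_iff.mp h0)
    refine ⟨Q, fun k => ?_⟩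
    rw [hp] at hmain
    simp only [pow_zero, mul_one, Polynomial.coe_zero, zero_add] at hmain
    have := congrArg (fun φ => PowerSeries.coeff k φ) hmain
    simpa using this
  | succ n ih =>
    intro p Q f hdeg hmain
    set b : Polynomial ℂ := X ^ d - C 1 with hb
    have hmonic : b.Monic := monic_X_pow_sub_C 1 (by omega)
    have hdegb : b.degree = (d : WithBot ℕ) := by
      rw [hb]; exact degree_X_pow_sub_C hd 1
    set p₀ : Polynomial ℂ := p %ₘ b with hp₀def
    set p₁ : Polynomial ℂ := p /ₘ b with hp₁def
    have hdiv : p₀ + b * p₁ = p := modByMonic_add_div p b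
    have hp₀deg : p₀.degree < (d : WithBot ℕ) := by
      rw [← hdegb]; exact degree_modByMonic_lt p hmonic
    obtain ⟨R, hR⟩ := lemC d hd p₀ Q
    -- power series identity for the R family
    have hkey : PowerSeries.mk (fun k => (R (k % d)).eval (k:ℂ)) *
        ((1 : PowerSeries ℂ) - PowerSeries.X ^ d)
        = (p₀ : PowerSeries ℂ) + PowerSeries.mk (fun k => (Q (k % d)).eval (k : ℂ)) := by
      ext k
      rw [mul_sub, mul_one, map_sub, PowerSeries.coeff_mul_X_pow', map_add,
        PowerSeries.coeff_mk, Polynomial.coeff_coe, PowerSeries.coeff_mk]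
      by_cases hk : d ≤ k
      · rw [if_pos hk]
        rw [PowerSeries.coeff_mk]
        obtain ⟨k', rfl⟩ : ∃ k', k = k' + d := ⟨k - d, by omega⟩
        rw [Nat.add_sub_cancel]
        have hmod : (k' + d) % d = k' % d := Nat.add_mod_right k' d
        have hdiv' : (k' + d) / d = k' / d + 1 := Nat.add_div_right k' hd
        rw [hR (k' + d), hR k', hmod, hdiv']
        have hz : p₀.coeff (k' + d) = 0 := by
          apply coeff_eq_zero_of_degree_lt
          calc p₀.degree < (d : WithBot ℕ) := hp₀deg
          _ ≤ ((k' + d : ℕ) : WithBot ℕ) := by exact_mod_cast (by omega : d ≤ k' + d)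
        rw [hz, Finset.sum_range_succ]
        have harg : ((((k' + d) % d : ℕ)) : ℂ) + (d:ℂ) * ((k'/d + 1 : ℕ) : ℂ)
            = ((k' + d : ℕ) : ℂ) := by
          have h1 : d * (k' / d) + k' % d = k' := Nat.div_add_mod k' d
          have : ((d * (k' / d) + k' % d : ℕ) : ℂ) = (k' : ℂ) := by rw [h1]
          push_cast at this ⊢
          rw [hmod]
          push_cast
          linear_combination this
        rw [hmod] at harg
        rw [harg]
        ring
      · rw [if_neg hk]
        push_neg at hk
        rw [hR k, Nat.mod_eq_of_lt hk, Nat.div_eq_of_lt hk]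
        simp [Nat.mod_eq_of_lt hk]
    -- cancel (1 - X^d)
    have hone : ((1 : PowerSeries ℂ) - PowerSeries.X ^ d) ≠ 0 := by
      intro hcon
      have := congrArg (PowerSeries.constantCoeff (R := ℂ)) hcon
      simp [zero_pow (by omega : d ≠ 0)] at this
    have hstep : PowerSeries.mk f * ((1 : PowerSeries ℂ) - PowerSeries.X ^ d) ^ n
        = ((-p₁ : Polynomial ℂ) : PowerSeries ℂ)
          + PowerSeries.mk (fun k => (R (k % d)).eval (k : ℂ)) := by
      apply mul_right_cancel₀ hone
      rw [add_mul, hkey]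
      rw [mul_assoc, ← pow_succ, hmain]
      have hpoly : ((-p₁ : Polynomial ℂ) : PowerSeries ℂ) *
          ((1 : PowerSeries ℂ) - PowerSeries.X ^ d) + (p₀ : PowerSeries ℂ)
          = (p : PowerSeries ℂ) := by
        have h2 : ((1 : PowerSeries ℂ) - PowerSeries.X ^ d)
            = (((1 - X ^ d : Polynomial ℂ)) : PowerSeries ℂ) := by
          rw [Polynomial.coe_sub, Polynomial.coe_pow, Polynomial.coe_one, Polynomial.coe_X]
        rw [h2, ← Polynomial.coe_mul, ← Polynomial.coe_add]
        congr 1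
        rw [← hdiv, hb, C_1]
        ring
      rw [← hpoly]
      ring
    -- degree bound for -p₁
    have hdeg₁ : (-p₁ : Polynomial ℂ).degree < ((n * d : ℕ) : WithBot ℕ) := by
      rw [degree_neg]
      by_cases hz : p₁ = 0
      · rw [hz, degree_zero]; exact WithBot.bot_lt_coe _
      · have hbp : (b * p₁).degree = (d : WithBot ℕ) + p₁.degree := by
          rw [degree_mul, hdegb]
        have hple : p₀.degree < (b * p₁).degree := by
          rw [hbp]
          calc p₀.degree < (d : WithBot ℕ) := hp₀deg
          _ ≤ (d : WithBot ℕ) + p₁.degree := by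
              rw [Polynomial.degree_eq_natDegree hz]
              calc (d : WithBot ℕ) ≤ ((d + p₁.natDegree : ℕ) : WithBot ℕ) := by
                    exact_mod_cast Nat.le_add_right d _
              _ = (d : WithBot ℕ) + (p₁.natDegree : WithBot ℕ) := by exact_mod_cast rfl
        have hpdeg : p.degree = (b * p₁).degree := by
          rw [← hdiv]
          exact degree_add_eq_right_of_degree_lt hple
        rw [hpdeg, hbp] at hdeg
        obtain he := Polynomial.degree_eq_natDegree hz
        rw [he] at hdeg ⊢
        rw [show ((d : WithBot ℕ) + (p₁.natDegree : WithBot ℕ)) = ((d + p₁.natDegree : ℕ) : WithBot ℕ) by exact_mod_cast rfl] at hdeg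
        have h4 : d + p₁.natDegree < (n+1) * d := by exact_mod_cast hdeg
        rw [Nat.succ_mul] at h4
        exact_mod_cast (by omega : p₁.natDegree < n * d)
    exact ih (-p₁) R f hdeg₁ hstep


/-- Let `w_1, …, w_n` be positive integer weights, `d = lcm(w_i)`,
`g(t) = ∏ (1 - t^{w_i})` (of degree `∑ w_i`), `h ∈ ℂ[t]`, and `f : ℕ → ℂ` with
`∑ f(k) t^k = h(t)/g(t)`.  With `k₀ = max {0, deg h - deg g + 1}`, there is a
quasi-polynomial `P_0, …, P_{d-1}` with `f(k) = P_{k mod d}(k)` for all `k ≥ k₀`,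
and if `deg h ≥ deg g` no such family agrees with `f` at `k₀ - 1`:
the generalized regularity index of `f` is exactly `k₀`. -/
theorem stmt_0 (n : ℕ) (hn : 1 ≤ n) (w : Fin n → ℕ) (hw : ∀ i, 0 < w i)
    (d : ℕ) (hd : d = Finset.lcm Finset.univ w)
    (h : Polynomial ℂ) (f : ℕ → ℂ)
    (hfg : PowerSeries.mk f * ((∏ i, (1 - Polynomial.X ^ w i : Polynomial ℂ)) : PowerSeries ℂ)
      = (h : PowerSeries ℂ))
    (k₀ : ℕ) (hk₀ : k₀ = ((h.natDegree : ℤ) - (∑ i, w i : ℕ) + 1).toNat) :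
    (∃ P : ℕ → Polynomial ℂ, ∀ k, k₀ ≤ k → f k = (P (k % d)).eval (k : ℂ)) ∧
    ((∑ i, w i : ℕ) ≤ h.natDegree →
      ∀ P : ℕ → Polynomial ℂ, (∀ k, k₀ ≤ k → f k = (P (k % d)).eval (k : ℂ)) →
        f (k₀ - 1) ≠ (P ((k₀ - 1) % d)).eval ((k₀ - 1 : ℕ) : ℂ)) := by
  -- basic positivity
  have hd0 : 0 < d := by
    rcases Nat.eq_zero_or_pos d with h0 | h0
    · exfalso
      rw [hd] at h0
      rcases (Finset.lcm_eq_zero_iff).mp h0 with ⟨i, _, hi⟩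
      exact (hw i).ne' hi
    · exact h0
  have hwd : ∀ i, w i ∣ d := fun i => hd ▸ Finset.dvd_lcm (Finset.mem_univ i)
  have hsumw : 1 ≤ ∑ i, w i := by
    calc 1 ≤ n := hn
    _ = ∑ _i : Fin n, 1 := by simp
    _ ≤ ∑ i, w i := Finset.sum_le_sum (fun i _ => hw i)
  set G : Polynomial ℂ := ∏ i, (1 - X ^ w i) with hG
  set Gm : Polynomial ℂ := ∏ i, (X ^ w i - C 1) with hGm
  have hGm_monic : Gm.Monic :=
    monic_prod_of_monic _ _ (fun i _ => monic_X_pow_sub_C 1 (hw i).ne')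
  have hGmdeg : Gm.natDegree = ∑ i, w i := by
    rw [hGm, natDegree_prod _ _ (fun i _ => (monic_X_pow_sub_C (1:ℂ) (hw i).ne').ne_zero)]
    exact Finset.sum_congr rfl (fun i _ => natDegree_X_pow_sub_C)
  have hGmdegree : Gm.degree = ((∑ i, w i : ℕ) : WithBot ℕ) := by
    rw [degree_eq_natDegree hGm_monic.ne_zero, hGmdeg]
  have hGGm : G = (-1 : Polynomial ℂ) ^ n * Gm := by
    rw [hG, hGm]
    have hfac : ∀ i ∈ Finset.univ, (1 - X ^ w i : Polynomial ℂ) = (-1) * (X ^ w i - C 1) := by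
      intro i _
      rw [C_1]; ring
    rw [Finset.prod_congr rfl hfac, Finset.prod_mul_distrib, Finset.prod_const,
      Finset.card_univ, Fintype.card_fin]
  -- divisibility G ∣ (1 - X^d)^n
  obtain ⟨K, hK⟩ : G ∣ (1 - X ^ d : Polynomial ℂ) ^ n := by
    have : ((1 - X ^ d : Polynomial ℂ)) ^ n = ∏ _i : Fin n, (1 - X ^ d : Polynomial ℂ) := by
      rw [Finset.prod_const, Finset.card_univ, Fintype.card_fin]
    rw [this, hG]
    apply Finset.prod_dvd_prod_of_dvd
    intro i _
    obtain ⟨m, hm⟩ := hwd i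
    have : (1 - X ^ d : Polynomial ℂ) = 1 ^ m - (X ^ w i) ^ m := by
      rw [one_pow, ← pow_mul, ← hm]
    rw [this]
    exact sub_dvd_pow_sub_pow 1 (X ^ w i) m
  -- division of h by Gm
  set q0 : Polynomial ℂ := h /ₘ Gm with hq0def
  set r0 : Polynomial ℂ := h %ₘ Gm with hr0def
  have hdiv : r0 + Gm * q0 = h := modByMonic_add_div h Gm
  have hr0deg : r0.degree < ((∑ i, w i : ℕ) : WithBot ℕ) := by
    rw [← hGmdegree]; exact degree_modByMonic_lt h hGm_monic
  set q : Polynomial ℂ := (-1 : Polynomial ℂ) ^ n * q0 with hqdef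
  have hGq : q * G = Gm * q0 := by
    rw [hGGm, hqdef]
    have hsq : ((-1 : Polynomial ℂ) ^ n) * ((-1 : Polynomial ℂ) ^ n) = 1 := by
      rw [← pow_add]
      exact Even.neg_one_pow ⟨n, rfl⟩
    calc (-1:Polynomial ℂ)^n * q0 * ((-1:Polynomial ℂ)^n * Gm)
        = ((-1:Polynomial ℂ)^n * (-1:Polynomial ℂ)^n) * (Gm * q0) := by ring
    _ = Gm * q0 := by rw [hsq, one_mul]
  set f₁ : ℕ → ℂ := fun k => f k - q.coeff k with hf₁
  have hmkf₁ : PowerSeries.mk f₁ = PowerSeries.mk f - (q : PowerSeries ℂ) := by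
    ext k
    simp [hf₁, Polynomial.coeff_coe]
  have hGcoe : (G : PowerSeries ℂ) = ∏ i, ((1 - X ^ w i : Polynomial ℂ) : PowerSeries ℂ) := by
    rw [hG]
    simp only [← Polynomial.coeToPowerSeries.ringHom_apply, map_prod]
  have heq1 : PowerSeries.mk f₁ * (G : PowerSeries ℂ) = (r0 : PowerSeries ℂ) := by
    rw [hmkf₁, sub_mul, hGcoe, hfg, ← hGcoe, ← Polynomial.coe_mul, hGq,
      ← Polynomial.coe_sub]
    congr 1
    rw [← hdiv]
    ring
  -- multiply by K
  have hdeg1 : (1 - X ^ d : Polynomial ℂ).degree = (d : WithBot ℕ) := by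
    have : (1 - X ^ d : Polynomial ℂ) = -(X ^ d - C 1) := by rw [C_1]; ring
    rw [this, degree_neg]
    exact degree_X_pow_sub_C hd0 1
  have hone_ne : (1 - X ^ d : Polynomial ℂ) ≠ 0 := by
    intro hcon
    rw [hcon, degree_zero] at hdeg1
    simp at hdeg1
  have hKne : K ≠ 0 := by
    intro hcon
    rw [hcon, mul_zero] at hK
    exact pow_ne_zero n hone_ne hK
  have hGne : G ≠ 0 := by
    intro hcon
    rw [hcon, zero_mul] at hK
    exact pow_ne_zero n hone_ne hK
  have hGdegree : G.degree = ((∑ i, w i : ℕ) : WithBot ℕ) := by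
    rw [hGGm, degree_mul, hGmdegree]
    have : ((-1 : Polynomial ℂ) ^ n).degree = 0 := by
      rw [degree_pow, degree_neg, degree_one]
      simp
    rw [this, zero_add]
  have hsmul : ∀ m : ℕ, m • ((d:ℕ) : WithBot ℕ) = ((m * d : ℕ) : WithBot ℕ) := by
    intro m
    induction m with
    | zero => simp
    | succ t ih =>
      rw [succ_nsmul, ih, Nat.succ_mul]
      exact_mod_cast rfl
  have hpowdeg : ((1 - X ^ d : Polynomial ℂ) ^ n).degree = ((n * d : ℕ) : WithBot ℕ) := by
    rw [degree_pow, hdeg1, hsmul]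
  have hdegrK : (r0 * K).degree < ((n * d : ℕ) : WithBot ℕ) := by
    rw [degree_mul]
    have hsplit : G.degree + K.degree = ((n * d : ℕ) : WithBot ℕ) := by
      rw [← degree_mul, ← hK, hpowdeg]
    calc r0.degree + K.degree < G.degree + K.degree := by
          apply WithBot.add_lt_add_right
          · exact degree_eq_bot.not.mpr hKne
          · rw [hGdegree]; exact hr0deg
    _ = ((n * d : ℕ) : WithBot ℕ) := hsplit
  have heq2 : PowerSeries.mk f₁ * ((1 : PowerSeries ℂ) - PowerSeries.X ^ d) ^ n
      = ((r0 * K : Polynomial ℂ) : PowerSeries ℂ) := by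
    have hcoe : ((1 : PowerSeries ℂ) - PowerSeries.X ^ d)
        = ((1 - X ^ d : Polynomial ℂ) : PowerSeries ℂ) := by
      rw [Polynomial.coe_sub, Polynomial.coe_pow, Polynomial.coe_one, Polynomial.coe_X]
    rw [hcoe, ← Polynomial.coe_pow, hK, Polynomial.coe_mul, ← mul_assoc, heq1,
      ← Polynomial.coe_mul]
  -- apply lemB
  obtain ⟨P₁, hP₁⟩ : ∃ P : ℕ → Polynomial ℂ, ∀ k, f₁ k = (P (k % d)).eval (k : ℂ) := by
    apply lemB d hd0 n (r0 * K) (fun _ => 0) f₁ hdegrK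
    rw [heq2]
    have : (PowerSeries.mk (fun k => ((fun _ => (0 : Polynomial ℂ)) (k % d)).eval (k:ℂ)))
        = 0 := by
      ext k
      simp
    rw [this, add_zero]
  -- coefficient facts about q
  have hqcoeff : ∀ k, q.coeff k = (-1 : ℂ) ^ n * q0.coeff k := by
    intro k
    rw [hqdef]
    have : ((-1 : Polynomial ℂ) ^ n) = C ((-1 : ℂ) ^ n) := by
      rw [map_pow, map_neg, C_1]
    rw [this, coeff_C_mul]
  have hfk : ∀ k, f k = f₁ k + (-1 : ℂ) ^ n * q0.coeff k := by
    intro k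
    rw [hf₁]
    simp only
    rw [hqcoeff k]
    ring
  -- degree of q0 when q0 ≠ 0
  have hdegh : q0 ≠ 0 → h.natDegree = (∑ i, w i) + q0.natDegree := by
    intro hq0z
    have hbp : (Gm * q0).degree = ((∑ i, w i : ℕ) : WithBot ℕ) + q0.degree := by
      rw [degree_mul, hGmdegree]
    have hlt : r0.degree < (Gm * q0).degree := by
      rw [hbp]
      calc r0.degree < ((∑ i, w i : ℕ) : WithBot ℕ) := hr0deg
      _ ≤ ((∑ i, w i : ℕ) : WithBot ℕ) + q0.degree := by
          rw [Polynomial.degree_eq_natDegree hq0z]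
          calc ((∑ i, w i : ℕ) : WithBot ℕ) ≤ (((∑ i, w i) + q0.natDegree : ℕ) : WithBot ℕ) := by
                exact_mod_cast Nat.le_add_right _ _
          _ = ((∑ i, w i : ℕ) : WithBot ℕ) + (q0.natDegree : WithBot ℕ) := by exact_mod_cast rfl
    have hdegeq : h.degree = (Gm * q0).degree := by
      rw [← hdiv]
      exact degree_add_eq_right_of_degree_lt hlt
    have hGmq0ne : Gm * q0 ≠ 0 := mul_ne_zero hGm_monic.ne_zero hq0z
    have hhne : h ≠ 0 := by
      intro hcon
      rw [hcon, degree_zero] at hdegeq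
      exact degree_eq_bot.not.mpr hGmq0ne hdegeq.symm
    rw [Polynomial.degree_eq_natDegree hhne, hbp, Polynomial.degree_eq_natDegree hq0z] at hdegeq
    exact_mod_cast hdegeq
  have hq0small : ∀ k, k₀ ≤ k → q0.coeff k = 0 := by
    intro k hk
    by_cases hq0z : q0 = 0
    · rw [hq0z, coeff_zero]
    · apply coeff_eq_zero_of_natDegree_lt
      have hnd := hdegh hq0z
      rw [hk₀, hnd] at hk
      omega
  constructor
  · -- existence
    refine ⟨P₁, fun k hk => ?_⟩
    rw [hfk k, hq0small k hk, mul_zero, add_zero]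
    exact hP₁ k
  · -- sharpness
    intro hge P hP
    have hq0z : q0 ≠ 0 := by
      intro hcon
      rw [hcon, mul_zero, add_zero] at hdiv
      have hhne : h ≠ 0 := by
        intro hcon2
        rw [hcon2, natDegree_zero] at hge
        omega
      have : h.natDegree < ∑ i, w i := by
        rw [← hdiv] at hge ⊢
        exact (natDegree_lt_iff_degree_lt (by rw [hdiv]; exact hhne)).mpr hr0deg
      omega
    have hnd : h.natDegree = (∑ i, w i) + q0.natDegree := hdegh hq0z
    have hk₀val : k₀ = q0.natDegree + 1 := by
      rw [hk₀, hnd]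
      push_cast
      omega
    set r : ℕ := (k₀ - 1) % d with hrdef
    -- P r = P₁ r via infinitely many common values
    have hPr : P r = P₁ r := by
      have hroot : ∀ m : ℕ, (P r - P₁ r).IsRoot (((k₀ - 1) + (m+1) * d : ℕ) : ℂ) := by
        intro m
        set km : ℕ := (k₀ - 1) + (m+1) * d with hkm
        have hkm₀ : k₀ ≤ km := by
          have : 0 < (m+1) * d := Nat.mul_pos (by omega) hd0
          omega
        have hkmmod : km % d = r := by
          rw [hkm, hrdef, Nat.add_mul_mod_self_right]
        have h1 : f km = (P r).eval (km : ℂ) := by rw [← hkmmod]; exact hP km hkm₀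
        have h2 : f km = (P₁ r).eval (km : ℂ) := by
          rw [hfk km, hq0small km hkm₀, mul_zero, add_zero, ← hkmmod]
          exact hP₁ km
        show eval ((km : ℕ) : ℂ) (P r - P₁ r) = 0
        rw [eval_sub, ← h1, ← h2, sub_self]
      have hinj : Function.Injective (fun m : ℕ => (((k₀ - 1) + (m+1) * d : ℕ) : ℂ)) := by
        intro a b hab
        have hab2 : ((k₀ - 1 + (a+1) * d : ℕ) : ℂ) = ((k₀ - 1 + (b+1) * d : ℕ) : ℂ) := hab
        have h1 : (k₀ - 1) + (a+1) * d = (k₀ - 1) + (b+1) * d := by exact_mod_cast hab2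
        have h2 := Nat.eq_of_mul_eq_mul_right hd0 (by omega : (a+1) * d = (b+1) * d)
        omega
      have hinf : Set.Infinite {x : ℂ | (P r - P₁ r).IsRoot x} :=
        Set.infinite_of_injective_forall_mem hinj (fun m => hroot m)
      have h0 := Polynomial.eq_zero_of_infinite_isRoot _ hinf
      have := sub_eq_zero.mp h0
      exact this
    -- final contradiction
    have hlead : q0.coeff (k₀ - 1) = q0.leadingCoeff := by
      rw [hk₀val, Nat.add_sub_cancel]
      rfl
    rw [hfk (k₀ - 1), hlead, hPr]
    have hf₁val : f₁ (k₀ - 1) = (P₁ r).eval ((k₀ - 1 : ℕ) : ℂ) := by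
      rw [hrdef]
      exact hP₁ (k₀ - 1)
    rw [hf₁val]
    intro hcon
    have hzero : (-1 : ℂ) ^ n * q0.leadingCoeff = 0 := by
      have := add_eq_left.mp hcon
      exact this
    have hne : (-1 : ℂ) ^ n * q0.leadingCoeff ≠ 0 :=
      mul_ne_zero (pow_ne_zero n (by norm_num)) (leadingCoeff_ne_zero.mpr hq0z)
    exact hne hzero
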